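/- (Lemma 2, attainment in the limit) Let g, N₀, Γ > 0 and let U be a nonempty finite index set of users with traffic demands T_u > 0 and attenuations ℓ_u > 0. Along the bandwidth allocations w_u(t) = t·T_u, the total transmit power Σ_u (g·N₀·Γ/ℓ_u)·(2^{T_u/w_u(t)} − 1)·w_u(t) tends to g·N₀·Γ·ln 2 · Σ_u T_u/ℓ_u as t → ∞. Hence the energy efficiency c·(Σ_u T_u)/(total power) tends to the upper bound EE* = c·(Σ_u T_u)/( g·N₀·Γ·ln 2 · Σ_u T_u/ℓ_u ) as the total bandwidth tends to infinity. -/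

import Mathlib

open Real Finset Filter

lemma key_tendsto : Tendsto (fun t : ℝ => ((2 : ℝ) ^ (1 / t) - 1) * t) atTop
    (nhds (Real.log 2)) := by
  have hd : HasDerivAt (fun x : ℝ => (2 : ℝ) ^ x) (Real.log 2) 0 := by
    simpa using (hasStrictDerivAt_const_rpow (by norm_num : (0:ℝ) < 2) 0).hasDerivAt
  have hslope := hasDerivAt_iff_tendsto_slope.mp hd
  have hinv : Tendsto (fun t : ℝ => 1 / t) atTop (nhdsWithin 0 {(0:ℝ)}ᶜ) := by
    apply tendsto_nhdsWithin_of_tendsto_nhds_of_eventually_within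
    · simpa using tendsto_inv_atTop_zero
    · filter_upwards [eventually_gt_atTop (0:ℝ)] with t ht
      simp [ne_of_gt, one_div, inv_ne_zero ht.ne']
  have := hslope.comp hinv
  apply this.congr'
  filter_upwards [eventually_gt_atTop (0:ℝ)] with t ht
  simp only [Function.comp, slope_def_field]
  rw [Real.rpow_zero]
  field_simp
  ring

theorem stmt_14 {ι : Type*} (U : Finset ι) (hU : U.Nonempty)
    (g N₀ Γ c : ℝ) (T ℓ : ι → ℝ)
    (hg : 0 < g) (hN₀ : 0 < N₀) (hΓ : 0 < Γ) (hc : 0 < c)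
    (hT : ∀ u ∈ U, 0 < T u) (hℓ : ∀ u ∈ U, 0 < ℓ u) :
    Tendsto
      (fun t : ℝ =>
        ∑ u ∈ U, g * N₀ * Γ / ℓ u * ((2 : ℝ) ^ (T u / (t * T u)) - 1) * (t * T u))
      atTop (nhds (g * N₀ * Γ * Real.log 2 * ∑ u ∈ U, T u / ℓ u)) ∧
    Tendsto
      (fun t : ℝ =>
        c * (∑ u ∈ U, T u) /
          (∑ u ∈ U, g * N₀ * Γ / ℓ u * ((2 : ℝ) ^ (T u / (t * T u)) - 1) * (t * T u)))
      atTop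
      (nhds (c * (∑ u ∈ U, T u) / (g * N₀ * Γ * Real.log 2 * ∑ u ∈ U, T u / ℓ u))) := by
  have h1 : Tendsto
      (fun t : ℝ =>
        ∑ u ∈ U, g * N₀ * Γ / ℓ u * ((2 : ℝ) ^ (T u / (t * T u)) - 1) * (t * T u))
      atTop (nhds (g * N₀ * Γ * Real.log 2 * ∑ u ∈ U, T u / ℓ u)) := by
    have hlim : Tendsto
        (fun t : ℝ => ∑ u ∈ U, (g * N₀ * Γ / ℓ u * T u) * (((2 : ℝ) ^ (1 / t) - 1) * t))
        atTop (nhds (∑ u ∈ U, (g * N₀ * Γ / ℓ u * T u) * Real.log 2)) := by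
      exact tendsto_finset_sum _ fun u hu => (key_tendsto.const_mul _)
    have heq : (∑ u ∈ U, (g * N₀ * Γ / ℓ u * T u) * Real.log 2)
        = g * N₀ * Γ * Real.log 2 * ∑ u ∈ U, T u / ℓ u := by
      rw [Finset.mul_sum]
      apply Finset.sum_congr rfl
      intro u hu
      have := (hℓ u hu).ne'
      field_simp
    rw [heq] at hlim
    apply hlim.congr'
    filter_upwards [eventually_gt_atTop (0:ℝ)] with t ht
    apply Finset.sum_congr rfl
    intro u hu
    have hTu := (hT u hu).ne'
    rw [mul_comm t (T u), div_mul_cancel_left₀ hTu, one_div]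
    ring
  refine ⟨h1, ?_⟩
  have hden : g * N₀ * Γ * Real.log 2 * ∑ u ∈ U, T u / ℓ u ≠ 0 := by
    have hsum : 0 < ∑ u ∈ U, T u / ℓ u :=
      Finset.sum_pos (fun u hu => div_pos (hT u hu) (hℓ u hu)) hU
    positivity
  exact tendsto_const_nhds.div h1 hden
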